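/- Let S be a semibounded linear relation in H with lower bound γ, c ≤ γ, and Q_c a representing map for t(S) - c with companion relation J_c. An element ψ' ∈ H belongs to dom J_c* if and only if there exists a constant C < ∞ such that |⟨φ', ψ'⟩|² ≤ C · ⟨φ', φ⟩ for all (φ, φ') ∈ S - c. -/

import Mathlib

open scoped InnerProductSpace
open Filter Topology

noncomputable section

variable {E F F' : Type*}
  [NormedAddCommGroup E] [InnerProductSpace ℂ E] [CompleteSpace E]
  [NormedAddCommGroup F] [InnerProductSpace ℂ F] [CompleteSpace F]
  [NormedAddCommGroup F'] [InnerProductSpace ℂ F'] [CompleteSpace F']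

/-- The domain of a linear relation from `E` to `F`. -/
def dom (T : Set (E × F)) : Set E := Prod.fst '' T

/-- The range of a linear relation from `E` to `F`. -/
def ran (T : Set (E × F)) : Set F := Prod.snd '' T

/-- The multivalued part of a linear relation. -/
def mulp (T : Set (E × F)) : Set F := {y | ((0 : E), y) ∈ T}

/-- The kernel of a linear relation. -/
def kerr (T : Set (E × F)) : Set E := {x | (x, (0 : F)) ∈ T}

/-- The adjoint relation: `T* = {(h,k) : ⟪h, f'⟫ = ⟪k, f⟫ for all (f,f') ∈ T}`. -/
def adj (T : Set (E × F)) : Set (F × E) :=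
  {q | ∀ p ∈ T, ⟪q.2, p.1⟫_ℂ = ⟪q.1, p.2⟫_ℂ}

/-- The graph of the linear operator `Q` restricted to the domain `D`. -/
def graphOn (Q : E →ₗ[ℂ] F) (D : Set E) : Set (E × F) :=
  {p | p.1 ∈ D ∧ p.2 = Q p.1}

/-- The companion relation `J_c = {(Q_c φ, φ' - cφ) : (φ,φ') ∈ S}` of a representing
map `Q` for the form `t(S) - c`. -/
def companion (S : Submodule ℂ (E × E)) (c : ℝ) (Q : E →ₗ[ℂ] F) : Set (F × E) :=
  {r | ∃ p ∈ S, r = (Q p.1, p.2 - (c : ℂ) • p.1)}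

set_option maxHeartbeats 2000000 in
theorem mem_dom_adj_companion_iff (S : Submodule ℂ (E × E)) (γ c : ℝ) (hc : c ≤ γ)
    (hsym : ∀ p ∈ S, ∀ q ∈ S, ⟪p.2, q.1⟫_ℂ = ⟪p.1, q.2⟫_ℂ)
    (hsb : ∀ p ∈ S, γ * ‖p.1‖ ^ 2 ≤ (⟪p.2, p.1⟫_ℂ).re)
    (Q : E →ₗ[ℂ] F)
    (hrep : ∀ p ∈ S, ∀ q ∈ S,
      ⟪p.2 - (c : ℂ) • p.1, q.1⟫_ℂ = ⟪Q p.1, Q q.1⟫_ℂ)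
    (ψ' : E) :
    ψ' ∈ dom (adj (companion S c Q)) ↔
      ∃ C : ℝ, ∀ p ∈ S,
        ‖⟪p.2 - (c : ℂ) • p.1, ψ'⟫_ℂ‖ ^ 2 ≤
          C * (⟪p.2 - (c : ℂ) • p.1, p.1⟫_ℂ).re := by
  have hre : ∀ p ∈ S, (⟪p.2 - (c : ℂ) • p.1, p.1⟫_ℂ).re = ‖Q p.1‖ ^ 2 := by
    intro p hp
    rw [hrep p hp p hp]
    have := inner_self_eq_norm_sq (𝕜 := ℂ) (Q p.1)
    simpa [RCLike.re_to_complex] using this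
  constructor
  · rintro ⟨⟨a, k⟩, hq, rfl⟩
    refine ⟨‖k‖ ^ 2, fun p hp => ?_⟩
    have h1 : ⟪k, Q p.1⟫_ℂ = ⟪a, p.2 - (c : ℂ) • p.1⟫_ℂ :=
      hq (Q p.1, p.2 - (c : ℂ) • p.1) ⟨p, hp, rfl⟩
    have h2 : ‖⟪p.2 - (c : ℂ) • p.1, a⟫_ℂ‖ = ‖⟪k, Q p.1⟫_ℂ‖ := by
      rw [h1, ← inner_conj_symm, RingHomIsometric.norm_map]
    rw [hre p hp, h2]
    calc ‖⟪k, Q p.1⟫_ℂ‖ ^ 2 ≤ (‖k‖ * ‖Q p.1‖) ^ 2 := by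
          have := norm_inner_le_norm (𝕜 := ℂ) k (Q p.1)
          exact pow_le_pow_left₀ (norm_nonneg _) this 2
      _ = ‖k‖ ^ 2 * ‖Q p.1‖ ^ 2 := by ring
  · rintro ⟨C, hC⟩
    set C' := max C 0 with hC'def
    have hC'nn : 0 ≤ C' := le_max_right _ _
    have hC' : ∀ p ∈ S, ‖⟪p.2 - (c : ℂ) • p.1, ψ'⟫_ℂ‖ ^ 2 ≤ C' * ‖Q p.1‖ ^ 2 := by
      intro p hp
      have := hC p hp
      rw [hre p hp] at this
      exact this.trans (mul_le_mul_of_nonneg_right (le_max_left _ _) (sq_nonneg _))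
    set m : (E × E) →ₗ[ℂ] E := LinearMap.snd ℂ E E - (c : ℂ) • LinearMap.fst ℂ E E with hm
    set g : (E × E) →ₗ[ℂ] ℂ := (innerSL ℂ ψ').toLinearMap.comp m with hg
    set f : S →ₗ[ℂ] F := (Q.comp (LinearMap.fst ℂ E E)).comp S.subtype with hf
    set g' : S →ₗ[ℂ] ℂ := g.comp S.subtype with hg'
    have hg'val : ∀ x : S, g' x = ⟪ψ', (x : E × E).2 - (c : ℂ) • (x : E × E).1⟫_ℂ := by
      intro x
      simp [hg', hg, hm]
      rw [← Complex.coe_smul, inner_sub_right, inner_smul_right]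
    have hg'bound : ∀ x : S, ‖g' x‖ ^ 2 ≤ C' * ‖f x‖ ^ 2 := by
      intro x
      have h2 : ‖g' x‖ = ‖⟪(x : E × E).2 - (c : ℂ) • (x : E × E).1, ψ'⟫_ℂ‖ := by
        rw [hg'val x, ← inner_conj_symm, RingHomIsometric.norm_map]
      rw [h2]
      exact hC' x.1 x.2
    have hker : LinearMap.ker f ≤ LinearMap.ker g' := by
      intro x hx
      rw [LinearMap.mem_ker] at hx ⊢
      have h0 := hg'bound x
      rw [hx] at h0
      simp only [norm_zero] at h0
      have : ‖g' x‖ ^ 2 ≤ 0 := by simpa using h0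
      have h1 : ‖g' x‖ = 0 := by nlinarith [sq_nonneg ‖g' x‖, norm_nonneg (g' x)]
      exact norm_eq_zero.mp h1
    set L0 : (S ⧸ LinearMap.ker f) →ₗ[ℂ] ℂ := (LinearMap.ker f).liftQ g' hker with hL0
    set L : LinearMap.range f →ₗ[ℂ] ℂ :=
      L0.comp (f.quotKerEquivRange.symm : LinearMap.range f →ₗ[ℂ] S ⧸ LinearMap.ker f) with hL
    have hLval : ∀ (x : S) (h : f x ∈ LinearMap.range f), L ⟨f x, h⟩ = g' x := by
      intro x h
      rw [hL]
      simp only [LinearMap.coe_comp, LinearEquiv.coe_coe, Function.comp_apply]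
      rw [LinearMap.quotKerEquivRange_symm_apply_image f x h]
      rw [hL0]
      exact Submodule.liftQ_apply _ g' x
    have hbound : ∀ y : LinearMap.range f, ‖L y‖ ≤ Real.sqrt C' * ‖(y : F)‖ := by
      rintro ⟨y, x, rfl⟩
      rw [hLval x (LinearMap.mem_range_self f x)]
      have h1 : ‖g' x‖ ^ 2 ≤ C' * ‖f x‖ ^ 2 := hg'bound x
      have h2 : ‖g' x‖ = Real.sqrt (‖g' x‖ ^ 2) := (Real.sqrt_sq (norm_nonneg _)).symm
      rw [h2]
      calc Real.sqrt (‖g' x‖ ^ 2) ≤ Real.sqrt (C' * ‖f x‖ ^ 2) := Real.sqrt_le_sqrt h1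
        _ = Real.sqrt C' * ‖f x‖ := by
            rw [Real.sqrt_mul hC'nn, Real.sqrt_sq (norm_nonneg _)]
    set Lc : LinearMap.range f →L[ℂ] ℂ := L.mkContinuous (Real.sqrt C') hbound with hLc
    obtain ⟨G, hG, -⟩ := exists_extension_norm_eq (LinearMap.range f) Lc
    set k := (InnerProductSpace.toDual ℂ F).symm G with hk
    refine ⟨(ψ', k), ?_, rfl⟩
    rintro r ⟨p, hp, rfl⟩
    show ⟪k, Q p.1⟫_ℂ = ⟪ψ', p.2 - (c : ℂ) • p.1⟫_ℂ
    have hQp : Q p.1 = f ⟨p, hp⟩ := rfl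
    calc ⟪k, Q p.1⟫_ℂ = G (Q p.1) := InnerProductSpace.toDual_symm_apply
      _ = Lc ⟨f ⟨p, hp⟩, LinearMap.mem_range_self f ⟨p, hp⟩⟩ := by
          rw [hQp]; exact hG ⟨f ⟨p, hp⟩, LinearMap.mem_range_self f ⟨p, hp⟩⟩
      _ = g' ⟨p, hp⟩ := by
          rw [hLc]
          exact hLval ⟨p, hp⟩ _
      _ = ⟪ψ', p.2 - (c : ℂ) • p.1⟫_ℂ := hg'val ⟨p, hp⟩
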